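/- Let H ∈ (0,1) and set C_H = Γ(2H+1) · sin(πH) / (2π). Then for all r > 0 and s > 0, C_H · ∫_ℝ sin(r|η|) · sin(s|η|) · |η|^{-1-2H} dη = (1/4) · ( (r+s)^{2H} − |r−s|^{2H} ). -/

import Mathlib

open MeasureTheory Real Set Filter

lemma lapA {t : ℝ} (ht : 0 < t) :
    ∫ u in Ioi (0:ℝ), Real.exp (-(t*u)) * (1 - Real.cos u) = 1 / (t * (1 + t^2)) := by
  have h1t : (0:ℝ) < 1 + t^2 := by positivity
  set f : ℝ → ℝ := fun u => -(Real.exp (-(t*u))/t) +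
      Real.exp (-(t*u)) * (t * Real.cos u - Real.sin u) / (1 + t^2) with hf
  have hderiv : ∀ u ∈ Ici (0:ℝ), HasDerivAt f (Real.exp (-(t*u)) * (1 - Real.cos u)) u := by
    intro u _
    have hE : HasDerivAt (fun u => Real.exp (-(t*u))) (-t * Real.exp (-(t*u))) u := by
      have := (Real.hasDerivAt_exp (-(t*u))).comp u (((hasDerivAt_id u).const_mul t).neg)
      simpa [mul_comm, Function.comp_def, Pi.neg_def] using this
    have h2 : HasDerivAt (fun u => t * Real.cos u - Real.sin u)
        (t * (-Real.sin u) - Real.cos u) u :=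
      ((Real.hasDerivAt_cos u).const_mul t).sub (Real.hasDerivAt_sin u)
    have h3 := ((hE.div_const t).neg).add (((hE.mul h2)).div_const (1 + t^2))
    have h3' : HasDerivAt f _ u := h3
    convert h3' using 1
    field_simp
    ring
  have hint : IntegrableOn (fun u => Real.exp (-(t*u)) * (1 - Real.cos u)) (Ioi (0:ℝ)) := by
    have hbase : IntegrableOn (fun u => 2 * Real.exp (-(t*u))) (Ioi (0:ℝ)) := by
      have := (exp_neg_integrableOn_Ioi 0 ht).const_mul 2
      simpa [mul_comm, IntegrableOn] using this
    refine hbase.mono' ?_ ?_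
    · exact (((Real.continuous_exp.comp (continuous_const.mul continuous_id).neg)).mul
        (continuous_const.sub Real.continuous_cos)).aestronglyMeasurable
    · filter_upwards with u
      have h1 : |1 - Real.cos u| ≤ 2 := by
        have := Real.neg_one_le_cos u; have := Real.cos_le_one u
        rw [abs_le]; constructor <;> linarith
      have : |Real.exp (-(t*u)) * (1 - Real.cos u)| = Real.exp (-(t*u)) * |1 - Real.cos u| := by
        rw [abs_mul, abs_of_nonneg (Real.exp_pos _).le]
      rw [Real.norm_eq_abs, this]
      calc Real.exp (-(t*u)) * |1 - Real.cos u| ≤ Real.exp (-(t*u)) * 2 :=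
            mul_le_mul_of_nonneg_left h1 (Real.exp_pos _).le
        _ = 2 * Real.exp (-(t*u)) := by ring
  have htend : Tendsto f atTop (nhds 0) := by
    have hexp : Tendsto (fun u => Real.exp (-(t*u))) atTop (nhds 0) := by
      exact Real.tendsto_exp_neg_atTop_nhds_zero.comp (tendsto_id.const_mul_atTop ht)
    rw [show (0:ℝ) = -(0/t) + 0/(1+t^2) by simp]
    refine Tendsto.add (Tendsto.neg (hexp.div_const t)) (Tendsto.div_const ?_ _)
    refine squeeze_zero_norm (f := fun u => Real.exp (-(t*u)) * (t * Real.cos u - Real.sin u))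
      (a := fun u => Real.exp (-(t*u)) * (t + 1)) (fun u => ?_) (by simpa using hexp.mul_const (t+1))
    · rw [Real.norm_eq_abs, abs_mul, abs_of_nonneg (Real.exp_pos _).le]
      apply mul_le_mul_of_nonneg_left ?_ (Real.exp_pos _).le
      calc |t * Real.cos u - Real.sin u| ≤ |t * Real.cos u| + |Real.sin u| := abs_sub _ _
        _ ≤ t * 1 + 1 := by
            gcongr
            · rw [abs_mul, abs_of_pos ht]; gcongr; exact Real.abs_cos_le_one u
            · exact Real.abs_sin_le_one u
        _ = t + 1 := by ring
  have := integral_Ioi_of_hasDerivAt_of_tendsto' hderiv hint htend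
  rw [this, hf]
  simp only [mul_zero, neg_zero, Real.exp_zero, Real.cos_zero, Real.sin_zero]
  field_simp
  ring

lemma intQ {a : ℝ} (ha : -1 < a) (ha' : a < 1) :
    IntegrableOn (fun t : ℝ => t ^ a / (1 + t^2)) (Ioi (0:ℝ)) := by
  have hmeas : AEStronglyMeasurable (fun t : ℝ => t ^ a / (1 + t^2)) (volume.restrict (Ioi (0:ℝ))) := by
    refine ContinuousOn.aestronglyMeasurable (ContinuousOn.div
      (fun t ht => (Real.continuousAt_rpow_const t a (Or.inl (ne_of_gt ht))).continuousWithinAt)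
      (Continuous.continuousOn (by continuity)) (fun t _ => by positivity)) measurableSet_Ioi
  have h01 : IntegrableOn (fun t : ℝ => t ^ a / (1 + t^2)) (Ioc (0:ℝ) 1) := by
    have hb : IntegrableOn (fun t : ℝ => t ^ a) (Ioc (0:ℝ) 1) := by
      rw [← intervalIntegrable_iff_integrableOn_Ioc_of_le zero_le_one]
      exact intervalIntegral.intervalIntegrable_rpow' ha
    refine hb.mono' (hmeas.mono_measure (Measure.restrict_mono Ioc_subset_Ioi_self le_rfl)) ?_
    filter_upwards [ae_restrict_mem measurableSet_Ioc] with t ht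
    rw [Real.norm_eq_abs, abs_div, abs_of_nonneg (Real.rpow_nonneg ht.1.le a),
      abs_of_pos (by positivity : (0:ℝ) < 1 + t^2)]
    rw [div_le_iff₀ (by positivity)]
    nlinarith [Real.rpow_nonneg ht.1.le a, sq_nonneg t]
  have h1i : IntegrableOn (fun t : ℝ => t ^ a / (1 + t^2)) (Ioi (1:ℝ)) := by
    have hb : IntegrableOn (fun t : ℝ => t ^ (a - 2)) (Ioi (1:ℝ)) :=
      integrableOn_Ioi_rpow_of_lt (by linarith) one_pos
    refine hb.mono' (hmeas.mono_measure (Measure.restrict_mono (Ioi_subset_Ioi zero_le_one) le_rfl)) ?_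
    filter_upwards [ae_restrict_mem measurableSet_Ioi] with t ht
    have ht0 : (0:ℝ) < t := lt_trans one_pos ht
    rw [Real.norm_eq_abs, abs_div, abs_of_nonneg (Real.rpow_nonneg ht0.le a),
      abs_of_pos (by positivity : (0:ℝ) < 1 + t^2), Real.rpow_sub ht0,
      div_le_div_iff₀ (by positivity) (by positivity)]
    have h2 : t ^ ((2:ℝ)) = t ^ (2:ℕ) := by
      rw [← Real.rpow_natCast t 2]; norm_num
    rw [h2]
    nlinarith [Real.rpow_nonneg ht0.le a]
  have : Ioi (0:ℝ) = Ioc (0:ℝ) 1 ∪ Ioi (1:ℝ) := (Ioc_union_Ioi_eq_Ioi zero_le_one).symm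
  rw [this]
  exact h01.union h1i

lemma intC {H : ℝ} (h0 : 0 < H) (h1 : H < 1) :
    ∫ t in Ioi (0:ℝ), t ^ (2*H - 1) / (1 + t^2) = π / (2 * Real.sin (π * H)) := by
  set a : ℝ := 2*H - 1 with ha_def
  have ha : -1 < a := by simp only [ha_def]; linarith
  have hsq : ∀ t : ℝ, t ^ ((2:ℕ):ℝ) = t^(2:ℕ) := fun t => Real.rpow_natCast t 2
  -- inner integral over t for fixed v
  have key : ∀ v ∈ Ioi (0:ℝ), (∫ t in Ioi (0:ℝ), t ^ a * Real.exp (-((1+t^2)*v)))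
      = Real.exp (-v) * v ^ (-H) * (Real.Gamma H / 2) := by
    intro v hv
    rw [Set.mem_Ioi] at hv
    have hcongr : ∀ t ∈ Ioi (0:ℝ), t ^ a * Real.exp (-((1+t^2)*v))
        = Real.exp (-v) * (t ^ a * Real.exp (-v * t ^ (((2:ℕ):ℝ)))) := by
      intro t ht
      rw [hsq t, show -((1+t^2)*v) = -v + -v * t^(2:ℕ) by ring, Real.exp_add]
      ring
    rw [setIntegral_congr_fun measurableSet_Ioi hcongr, integral_const_mul]
    have h2 : ((2:ℕ):ℝ) = (2:ℝ) := by norm_num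
    rw [h2, integral_rpow_mul_exp_neg_mul_rpow two_pos ha hv]
    rw [show (a + 1) / 2 = H by rw [ha_def]; ring, show -(a+1)/2 = -H by rw [ha_def]; ring]
    ring
  -- slice integrability in t for fixed v
  have hslice : ∀ v ∈ Ioi (0:ℝ),
      IntegrableOn (fun t => t ^ a * Real.exp (-((1+t^2)*v))) (Ioi (0:ℝ)) := by
    intro v hv
    rw [Set.mem_Ioi] at hv
    have hbase := (integrableOn_rpow_mul_exp_neg_mul_sq hv ha).const_mul (Real.exp (-v))
    refine IntegrableOn.congr_fun hbase ?_ measurableSet_Ioi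
    intro t ht
    dsimp only
    rw [show -((1+t^2)*v) = -v + (-v * t^2) by ring, Real.exp_add]
    ring
  have hmeas : AEStronglyMeasurable (Function.uncurry fun v t : ℝ => t ^ a * Real.exp (-((1+t^2)*v)))
      ((volume.restrict (Ioi (0:ℝ))).prod (volume.restrict (Ioi (0:ℝ)))) := by
    apply Measurable.aestronglyMeasurable; fun_prop
  have hnn : ∀ v t : ℝ, 0 ≤ t → 0 ≤ t ^ a * Real.exp (-((1+t^2)*v)) := by
    intro v t ht; positivity
  have hGint : IntegrableOn (fun v : ℝ => Real.exp (-v) * v ^ ((1-H) - 1)) (Ioi (0:ℝ)) :=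
    Real.GammaIntegral_convergent (by linarith)
  have hφ : Integrable (fun v : ℝ => Real.exp (-v) * v ^ (-H) * (Real.Gamma H / 2))
      (volume.restrict (Ioi (0:ℝ))) := by
    refine IntegrableOn.congr_fun (hGint.mul_const (Real.Gamma H / 2)) ?_ measurableSet_Ioi
    intro v hv
    rw [show (1-H) - 1 = -H by ring]
  have hi : Integrable (Function.uncurry fun v t : ℝ => t ^ a * Real.exp (-((1+t^2)*v)))
      ((volume.restrict (Ioi (0:ℝ))).prod (volume.restrict (Ioi (0:ℝ)))) := by
    rw [MeasureTheory.integrable_prod_iff hmeas]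
    constructor
    · filter_upwards [ae_restrict_mem measurableSet_Ioi] with v hv
      exact hslice v hv
    · apply hφ.congr
      filter_upwards [ae_restrict_mem measurableSet_Ioi] with v hv
      rw [← key v hv]
      apply setIntegral_congr_fun measurableSet_Ioi
      intro t ht
      simp only [Function.uncurry]
      rw [Real.norm_eq_abs, abs_of_nonneg (hnn v t (le_of_lt ht))]
  have hswap := MeasureTheory.integral_integral_swap hi
  -- main chain
  have step2 : ∫ t in Ioi (0:ℝ), t ^ a / (1 + t^2)
      = ∫ t in Ioi (0:ℝ), ∫ v in Ioi (0:ℝ), t ^ a * Real.exp (-((1+t^2)*v)) := by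
    apply setIntegral_congr_fun measurableSet_Ioi
    intro t ht
    rw [Set.mem_Ioi] at ht
    have hr : (0:ℝ) < 1 + t^2 := by positivity
    have hexp := Real.integral_rpow_mul_exp_neg_mul_Ioi one_pos hr
    simp only [sub_self, Real.rpow_zero, one_mul, Real.Gamma_one, mul_one, Real.rpow_one] at hexp
    dsimp only
    rw [integral_const_mul, hexp, one_div, div_eq_mul_inv]
  rw [step2, ← hswap]
  rw [MeasureTheory.integral_congr_ae ((ae_restrict_mem measurableSet_Ioi).mono fun v hv => key v hv)]
  have hlast : ∫ v in Ioi (0:ℝ), Real.exp (-v) * v ^ (-H) * (Real.Gamma H / 2)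
      = (Real.Gamma H / 2) * ∫ v in Ioi (0:ℝ), Real.exp (-v) * v ^ ((1-H)-1) := by
    rw [← integral_const_mul]
    apply setIntegral_congr_fun measurableSet_Ioi
    intro v hv
    rw [show (1-H) - 1 = -H by ring]
    ring
  rw [hlast, ← Real.Gamma_eq_integral (by linarith : (0:ℝ) < 1 - H)]
  have hrefl := Real.Gamma_mul_Gamma_one_sub H
  have hsin : Real.sin (π * H) ≠ 0 := by
    have : 0 < Real.sin (π * H) :=
      Real.sin_pos_of_pos_of_lt_pi (by positivity) (by nlinarith [Real.pi_pos])
    exact ne_of_gt this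
  field_simp at hrefl ⊢
  nlinarith [hrefl]

lemma intK {H : ℝ} (h0 : 0 < H) (h1 : H < 1) :
    ∫ u in Ioi (0:ℝ), (1 - Real.cos u) * u ^ (-1-2*H)
      = π / (2 * Real.Gamma (2*H+1) * Real.sin (π * H)) := by
  have hG : 0 < Real.Gamma (2*H+1) := Real.Gamma_pos_of_pos (by linarith)
  set F : ℝ → ℝ → ℝ := fun t u => t ^ (2*H) * Real.exp (-(u*t)) * (1 - Real.cos u) with hF
  have hFnn : ∀ t u : ℝ, 0 ≤ t → 0 ≤ F t u := by
    intro t u ht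
    have := Real.cos_le_one u
    apply mul_nonneg (by positivity) (by linarith)
  -- inner integral over u for fixed t
  have keyU : ∀ t ∈ Ioi (0:ℝ), (∫ u in Ioi (0:ℝ), F t u) = t ^ (2*H-1) / (1 + t^2) := by
    intro t ht
    rw [Set.mem_Ioi] at ht
    have : (∫ u in Ioi (0:ℝ), F t u)
        = t ^ (2*H) * ∫ u in Ioi (0:ℝ), Real.exp (-(t*u)) * (1 - Real.cos u) := by
      rw [← integral_const_mul]
      apply setIntegral_congr_fun measurableSet_Ioi
      intro u hu
      simp only [hF]
      rw [mul_comm u t]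
      ring
    rw [this, lapA ht, Real.rpow_sub ht, Real.rpow_one]
    field_simp
  -- slice integrability in u for fixed t
  have hslice : ∀ t ∈ Ioi (0:ℝ), IntegrableOn (fun u => F t u) (Ioi (0:ℝ)) := by
    intro t ht
    rw [Set.mem_Ioi] at ht
    have hbase : IntegrableOn (fun u : ℝ => (t ^ (2*H) * 2) * Real.exp (-t*u)) (Ioi (0:ℝ)) :=
      ((exp_neg_integrableOn_Ioi 0 ht).const_mul (t ^ (2*H) * 2))
    refine hbase.mono' ?_ ?_
    · apply Measurable.aestronglyMeasurable; fun_prop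
    · filter_upwards [ae_restrict_mem measurableSet_Ioi] with u hu
      rw [Real.norm_eq_abs, abs_of_nonneg (hFnn t u ht.le), hF]
      simp only
      rw [mul_comm u t]
      have hc1 : 1 - Real.cos u ≤ 2 := by have := Real.neg_one_le_cos u; linarith
      calc t ^ (2*H) * Real.exp (-(t*u)) * (1 - Real.cos u)
          ≤ t ^ (2*H) * Real.exp (-(t*u)) * 2 := by
            apply mul_le_mul_of_nonneg_left hc1 (by positivity)
        _ = (t ^ (2*H) * 2) * Real.exp (-t*u) := by rw [neg_mul]; ring
  have hmeas : AEStronglyMeasurable (Function.uncurry F)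
      ((volume.restrict (Ioi (0:ℝ))).prod (volume.restrict (Ioi (0:ℝ)))) := by
    apply Measurable.aestronglyMeasurable
    simp only [hF]
    fun_prop
  have hQ := intQ (a := 2*H-1) (by linarith) (by linarith)
  have hi : Integrable (Function.uncurry F)
      ((volume.restrict (Ioi (0:ℝ))).prod (volume.restrict (Ioi (0:ℝ)))) := by
    rw [MeasureTheory.integrable_prod_iff hmeas]
    constructor
    · filter_upwards [ae_restrict_mem measurableSet_Ioi] with t ht
      exact hslice t ht
    · apply hQ.congr
      filter_upwards [ae_restrict_mem measurableSet_Ioi] with t ht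
      rw [← keyU t ht]
      apply setIntegral_congr_fun measurableSet_Ioi
      intro u hu
      rw [Set.mem_Ioi] at ht
      simp only [Function.uncurry]
      rw [Real.norm_eq_abs, abs_of_nonneg (hFnn t u ht.le)]
  have hswap := MeasureTheory.integral_integral_swap hi
  -- pointwise identity in u
  have keyT : ∀ u ∈ Ioi (0:ℝ), (∫ t in Ioi (0:ℝ), F t u)
      = Real.Gamma (2*H+1) * ((1 - Real.cos u) * u ^ (-1-2*H)) := by
    intro u hu
    rw [Set.mem_Ioi] at hu
    have hgamma := Real.integral_rpow_mul_exp_neg_mul_Ioi (a := 2*H+1) (by linarith) hu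
    have : (∫ t in Ioi (0:ℝ), F t u)
        = (∫ t in Ioi (0:ℝ), t ^ (2*H+1-1) * Real.exp (-(u*t))) * (1 - Real.cos u) := by
      rw [← integral_mul_const]
      apply setIntegral_congr_fun measurableSet_Ioi
      intro t ht
      simp only [hF]
      rw [show 2*H+1-1 = 2*H by ring]
    rw [this, hgamma]
    have hpow : (1/u) ^ (2*H+1) = u ^ (-1-2*H) := by
      rw [one_div, Real.inv_rpow hu.le, ← Real.rpow_neg hu.le,
        show -(2*H+1) = -1-2*H by ring]
    rw [hpow]
    ring
  calc ∫ u in Ioi (0:ℝ), (1 - Real.cos u) * u ^ (-1-2*H)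
      = (1 / Real.Gamma (2*H+1)) * ∫ u in Ioi (0:ℝ), ∫ t in Ioi (0:ℝ), F t u := by
        rw [MeasureTheory.integral_congr_ae
          ((ae_restrict_mem measurableSet_Ioi).mono fun u hu => keyT u hu), integral_const_mul]
        field_simp
    _ = (1 / Real.Gamma (2*H+1)) * ∫ t in Ioi (0:ℝ), ∫ u in Ioi (0:ℝ), F t u := by rw [← hswap]
    _ = (1 / Real.Gamma (2*H+1)) * ∫ t in Ioi (0:ℝ), t ^ (2*H-1) / (1+t^2) := by
        rw [MeasureTheory.integral_congr_ae
          ((ae_restrict_mem measurableSet_Ioi).mono fun t ht => keyU t ht)]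
    _ = π / (2 * Real.Gamma (2*H+1) * Real.sin (π * H)) := by
        rw [intC h0 h1]
        field_simp

lemma intJ {H : ℝ} (h0 : 0 < H) (h1 : H < 1) (t : ℝ) :
    IntegrableOn (fun x : ℝ => (1 - Real.cos (t*x)) * x ^ (-1-2*H)) (Ioi (0:ℝ)) := by
  have hmeas : AEStronglyMeasurable (fun x : ℝ => (1 - Real.cos (t*x)) * x ^ (-1-2*H))
      (volume.restrict (Ioi (0:ℝ))) := by
    apply Measurable.aestronglyMeasurable; fun_prop
  have hnn : ∀ x : ℝ, 0 ≤ x → 0 ≤ (1 - Real.cos (t*x)) * x ^ (-1-2*H) := by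
    intro x hx
    have := Real.cos_le_one (t*x)
    apply mul_nonneg (by linarith) (by positivity)
  have h01 : IntegrableOn (fun x : ℝ => (1 - Real.cos (t*x)) * x ^ (-1-2*H)) (Ioc (0:ℝ) 1) := by
    have hb : IntegrableOn (fun x : ℝ => (t^2/2) * x ^ (1-2*H)) (Ioc (0:ℝ) 1) := by
      have : IntegrableOn (fun x : ℝ => x ^ (1-2*H)) (Ioc (0:ℝ) 1) := by
        rw [← intervalIntegrable_iff_integrableOn_Ioc_of_le zero_le_one]
        exact intervalIntegral.intervalIntegrable_rpow' (by linarith)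
      exact this.const_mul _
    refine hb.mono' (hmeas.mono_measure (Measure.restrict_mono Ioc_subset_Ioi_self le_rfl)) ?_
    filter_upwards [ae_restrict_mem measurableSet_Ioc] with x hx
    rw [Real.norm_eq_abs, abs_of_nonneg (hnn x hx.1.le)]
    have hcos : 1 - Real.cos (t*x) ≤ (t*x)^2/2 := by
      have := Real.one_sub_sq_div_two_le_cos (x := t*x)
      linarith
    have hxp : (0:ℝ) < x ^ (-1-2*H) := Real.rpow_pos_of_pos hx.1 _
    calc (1 - Real.cos (t*x)) * x ^ (-1-2*H) ≤ ((t*x)^2/2) * x ^ (-1-2*H) := by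
          apply mul_le_mul_of_nonneg_right hcos hxp.le
      _ = (t^2/2) * (x^(2:ℕ) * x ^ (-1-2*H)) := by ring
      _ = (t^2/2) * x ^ (1-2*H) := by
          rw [← Real.rpow_natCast x 2, ← Real.rpow_add hx.1]
          congr 1
          push_cast
          ring
  have h1i : IntegrableOn (fun x : ℝ => (1 - Real.cos (t*x)) * x ^ (-1-2*H)) (Ioi (1:ℝ)) := by
    have hb : IntegrableOn (fun x : ℝ => 2 * x ^ (-1-2*H)) (Ioi (1:ℝ)) :=
      (integrableOn_Ioi_rpow_of_lt (by linarith) one_pos).const_mul 2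
    refine hb.mono' (hmeas.mono_measure (Measure.restrict_mono (Ioi_subset_Ioi zero_le_one) le_rfl)) ?_
    filter_upwards [ae_restrict_mem measurableSet_Ioi] with x hx
    have hx0 : (0:ℝ) < x := lt_trans one_pos hx
    rw [Real.norm_eq_abs, abs_of_nonneg (hnn x hx0.le)]
    have hxp : (0:ℝ) < x ^ (-1-2*H) := Real.rpow_pos_of_pos hx0 _
    have hcos : 1 - Real.cos (t*x) ≤ 2 := by have := Real.neg_one_le_cos (t*x); linarith
    exact mul_le_mul_of_nonneg_right hcos hxp.le
  rw [show Ioi (0:ℝ) = Ioc (0:ℝ) 1 ∪ Ioi (1:ℝ) from (Ioc_union_Ioi_eq_Ioi zero_le_one).symm]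
  exact h01.union h1i

lemma intJscale {H : ℝ} (h0 : 0 < H) (h1 : H < 1) {t : ℝ} (ht : 0 < t) :
    ∫ x in Ioi (0:ℝ), (1 - Real.cos (t*x)) * x ^ (-1-2*H)
      = t ^ (2*H) * ∫ u in Ioi (0:ℝ), (1 - Real.cos u) * u ^ (-1-2*H) := by
  have hcomp := integral_comp_mul_left_Ioi (fun x : ℝ => (1 - Real.cos x) * x ^ (-1-2*H)) 0 ht
  rw [mul_zero, smul_eq_mul] at hcomp
  beta_reduce at hcomp
  have hcongr : ∫ x in Ioi (0:ℝ), (1 - Real.cos (t*x)) * (t*x) ^ (-1-2*H)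
      = t ^ (-1-2*H) * ∫ x in Ioi (0:ℝ), (1 - Real.cos (t*x)) * x ^ (-1-2*H) := by
    rw [← integral_const_mul]
    apply setIntegral_congr_fun measurableSet_Ioi
    intro x hx
    rw [Set.mem_Ioi] at hx
    dsimp only
    rw [Real.mul_rpow ht.le hx.le]
    ring
  rw [hcongr] at hcomp
  have hne : t ^ (-1-2*H) ≠ 0 := (Real.rpow_pos_of_pos ht _).ne'
  have h2 : t ^ (2*H) = (t ^ (-1-2*H))⁻¹ * t⁻¹ := by
    rw [← Real.rpow_neg_one t, ← Real.rpow_neg ht.le, ← Real.rpow_add ht]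
    congr 1
    ring
  rw [h2, mul_assoc, ← hcomp, ← mul_assoc, inv_mul_cancel₀ hne, one_mul]

theorem stmt_6 (H : ℝ) (hH : H ∈ Set.Ioo (0 : ℝ) 1) (r s : ℝ) (hr : 0 < r) (hs : 0 < s) :
    (Real.Gamma (2 * H + 1) * Real.sin (Real.pi * H) / (2 * Real.pi)) *
        ∫ η : ℝ, Real.sin (r * |η|) * Real.sin (s * |η|) * |η| ^ (-1 - 2 * H) =
      (1 / 4) * ((r + s) ^ (2 * H) - |r - s| ^ (2 * H)) := by
  obtain ⟨h0, h1⟩ := hH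
  set K : ℝ := ∫ u in Ioi (0:ℝ), (1 - Real.cos u) * u ^ (-1-2*H) with hK
  -- reduce to half-line
  have habs : (∫ η : ℝ, Real.sin (r * |η|) * Real.sin (s * |η|) * |η| ^ (-1 - 2 * H))
      = 2 * ∫ x in Ioi (0:ℝ), Real.sin (r * x) * Real.sin (s * x) * x ^ (-1 - 2 * H) :=
    integral_comp_abs (f := fun x => Real.sin (r * x) * Real.sin (s * x) * x ^ (-1 - 2 * H))
  -- product-to-sum on half line
  have hhalf : (∫ x in Ioi (0:ℝ), Real.sin (r * x) * Real.sin (s * x) * x ^ (-1 - 2 * H))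
      = (1/2) * ((∫ x in Ioi (0:ℝ), (1 - Real.cos ((r+s)*x)) * x ^ (-1-2*H))
          - ∫ x in Ioi (0:ℝ), (1 - Real.cos ((|r-s|)*x)) * x ^ (-1-2*H)) := by
    rw [← MeasureTheory.integral_sub (intJ h0 h1 (r+s)) (intJ h0 h1 (|r-s|)), ← integral_const_mul]
    apply setIntegral_congr_fun measurableSet_Ioi
    intro x hx
    rw [Set.mem_Ioi] at hx
    dsimp only
    have h1' : (|r - s|) * x = |(r - s) * x| := by rw [abs_mul, abs_of_nonneg hx.le]
    rw [h1', Real.cos_abs, show (r-s)*x = r*x - s*x by ring, show (r+s)*x = r*x + s*x by ring,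
      Real.cos_sub, Real.cos_add]
    ring
  have hJrs : (∫ x in Ioi (0:ℝ), (1 - Real.cos ((r+s)*x)) * x ^ (-1-2*H)) = (r+s) ^ (2*H) * K :=
    intJscale h0 h1 (by linarith)
  have hJd : (∫ x in Ioi (0:ℝ), (1 - Real.cos ((|r-s|)*x)) * x ^ (-1-2*H)) = |r-s| ^ (2*H) * K := by
    rcases eq_or_ne r s with heq | hne
    · have : ∀ x ∈ Ioi (0:ℝ), (1 - Real.cos ((|r-s|)*x)) * x ^ (-1-2*H) = 0 := by
        intro x hx
        simp [heq]
      rw [setIntegral_congr_fun measurableSet_Ioi this]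
      simp [heq, Real.zero_rpow (by linarith : 2*H ≠ 0)]
    · exact intJscale h0 h1 (abs_pos.mpr (sub_ne_zero.mpr hne))
  have hKval := intK h0 h1
  have hG : 0 < Real.Gamma (2*H+1) := Real.Gamma_pos_of_pos (by linarith)
  have hsin : 0 < Real.sin (π * H) :=
    Real.sin_pos_of_pos_of_lt_pi (by positivity) (by nlinarith [Real.pi_pos])
  have hCK : Real.Gamma (2 * H + 1) * Real.sin (Real.pi * H) / (2 * Real.pi) * K = 1/4 := by
    rw [hK, hKval]
    have hsin2 : Real.sin (H * π) ≠ 0 := by rw [mul_comm]; exact hsin.ne'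
    field_simp
    ring
  rw [habs, hhalf, hJrs, hJd]
  have : Real.Gamma (2 * H + 1) * Real.sin (Real.pi * H) / (2 * Real.pi) *
      (2 * ((1/2) * ((r+s) ^ (2*H) * K - |r-s| ^ (2*H) * K)))
      = (Real.Gamma (2 * H + 1) * Real.sin (Real.pi * H) / (2 * Real.pi) * K)
        * ((r + s) ^ (2 * H) - |r - s| ^ (2 * H)) := by ring
  rw [this, hCK]
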